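/- Under the S⊎E partition hypotheses, let 𝒢⁺ be the instance obtained from 𝒢 by adding one additional receiver t_all with side information set S, wanted set E, and error resistance capability 0. Then I(q,𝒢⁺,δ_s⁺) = I(q,𝒢,δ_s), and an encoding F : F_q^{S⊎E} → F_q^N is a valid (δ_s,𝒢)-ICSIE encoding if and only if it is a valid (δ_s⁺,𝒢⁺)-ICSIE encoding; i.e., the receiver t_all is redundant. -/

import Mathlib

open Finset

/-- Restriction of a vector to the coordinates in a finite index set. -/
def proj {ι 𝔽 : Type*} (A : Finset ι) (x : ι → 𝔽) : {a // a ∈ A} → 𝔽 :=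
  fun a => x a.1

/-- `enc` is a valid (δ,𝒢)-ICSIE encoding: decoders exist recovering the wanted
messages from the codeword and side information with at most `δ r` errors. -/
def ValidEnc (𝔽 : Type*) [DecidableEq 𝔽] {ι R C : Type*}
    (X f : R → Finset ι) (δ : R → ℕ) (enc : (ι → 𝔽) → C) : Prop :=
  ∃ D : (r : R) → C → ({a // a ∈ X r} → 𝔽) → ({a // a ∈ f r} → 𝔽),
    ∀ (r : R) (x : ι → 𝔽) (xt : {a // a ∈ X r} → 𝔽),
      hammingDist (proj (X r) x) xt ≤ δ r → D r (enc x) xt = proj (f r) x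

/-- The set I(q,𝒢,δ_s). -/
def ISet (𝔽 : Type*) [Zero 𝔽] [DecidableEq 𝔽] {ι R : Type*}
    (X f : R → Finset ι) (δ : R → ℕ) : Set (ι → 𝔽) :=
  {Z | ∃ r : R, hammingNorm (proj (X r) Z) ≤ 2 * δ r ∧ proj (f r) Z ≠ 0}

/-- under the S⊎E partition hypotheses, adding the extra receiver
`t_all` (side information `S`, wanted set `E`, capability 0) changes neither
I(q,𝒢,δ_s) nor the validity of any encoding: `t_all` is redundant. -/
theorem tall_redundant
    {𝔽 : Type*} [Field 𝔽] [Fintype 𝔽] [DecidableEq 𝔽]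
    {S E R : Type*} [Fintype S] [Fintype E] [Fintype R]
    [DecidableEq S] [DecidableEq E]
    (X f : R → Finset (S ⊕ E)) (δ : R → ℕ)
    (hdisj : ∀ r, Disjoint (f r) (X r))
    (recv : E → R) (hinj : Function.Injective recv)
    (hwant : ∀ e : E, f (recv e) = {Sum.inr e})
    (hother : ∀ r : R, (∀ e : E, recv e ≠ r) → ∀ x ∈ f r, x.isLeft)
    (hacyc : ∃ ord : E → ℕ, ∀ e e' : E, Sum.inr e' ∈ X (recv e) → ord e' < ord e)
    {C : Type*} (enc : (S ⊕ E → 𝔽) → C) :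
    ISet 𝔽 (Sum.elim X fun _ : Unit => (Finset.univ.image Sum.inl : Finset (S ⊕ E)))
        (Sum.elim f fun _ : Unit => (Finset.univ.image Sum.inr : Finset (S ⊕ E)))
        (Sum.elim δ fun _ : Unit => 0)
      = ISet 𝔽 X f δ
    ∧ (ValidEnc 𝔽 X f δ enc ↔
        ValidEnc 𝔽
          (Sum.elim X fun _ : Unit => (Finset.univ.image Sum.inl : Finset (S ⊕ E)))
          (Sum.elim f fun _ : Unit => (Finset.univ.image Sum.inr : Finset (S ⊕ E)))
          (Sum.elim δ fun _ : Unit => 0) enc) := by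
  classical
  obtain ⟨ord, hord⟩ := hacyc
  constructor
  · ext Z
    constructor
    · rintro ⟨r, hnorm, hf⟩
      cases r with
      | inl r => exact ⟨r, hnorm, hf⟩
      | inr u =>
        have hS : ∀ s : S, Z (Sum.inl s) = 0 := by
          intro s
          have h0 : proj (Finset.univ.image Sum.inl : Finset (S ⊕ E)) Z = 0 := by
            have h1 : hammingNorm (proj (Finset.univ.image Sum.inl : Finset (S ⊕ E)) Z) = 0 :=
              Nat.le_zero.mp hnorm
            exact hammingNorm_eq_zero.mp h1
          have := congrFun h0 ⟨Sum.inl s, by simp⟩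
          simpa [proj] using this
        have hE : ∃ e : E, Z (Sum.inr e) ≠ 0 := by
          by_contra h
          push_neg at h
          apply hf
          funext a
          obtain ⟨a, ha⟩ := a
          simp only [Sum.elim_inr, Finset.mem_image, Finset.mem_univ, true_and] at ha
          obtain ⟨e, rfl⟩ := ha
          simpa [proj] using h e
        obtain ⟨e, he⟩ := hE
        have hne : (Finset.univ.filter (fun e : E => Z (Sum.inr e) ≠ 0)).Nonempty :=
          ⟨e, by simp [he]⟩
        obtain ⟨e0, he0, hmin⟩ :=
          (Finset.univ.filter (fun e : E => Z (Sum.inr e) ≠ 0)).exists_min_image ord hne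
        have he0' : Z (Sum.inr e0) ≠ 0 := by simpa using he0
        refine ⟨recv e0, ?_, ?_⟩
        · have hz : proj (X (recv e0)) Z = 0 := by
            funext a
            obtain ⟨a, ha⟩ := a
            match a with
            | Sum.inl s => simpa [proj] using hS s
            | Sum.inr e' =>
              have hlt := hord e0 e' ha
              by_contra hne'
              have hmem : e' ∈ Finset.univ.filter (fun e : E => Z (Sum.inr e) ≠ 0) := by
                simp only [Finset.mem_filter, Finset.mem_univ, true_and]
                simpa [proj] using hne'
              have := hmin e' hmem
              omega
          rw [hz]
          simp
        · intro h0
          apply he0'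
          have := congrFun h0 ⟨Sum.inr e0, by simp [hwant]⟩
          simpa [proj] using this
    · rintro ⟨r, h⟩
      exact ⟨Sum.inl r, h⟩
  · constructor
    · rintro ⟨D, hD⟩
      have det : ∀ (x x' : S ⊕ E → 𝔽), enc x = enc x' →
          (∀ s, x (Sum.inl s) = x' (Sum.inl s)) →
          ∀ e, x (Sum.inr e) = x' (Sum.inr e) := by
        intro x x' hc hs
        have key : ∀ n : ℕ, ∀ e : E, ord e < n → x (Sum.inr e) = x' (Sum.inr e) := by
          intro n
          induction n with
          | zero => intro e h; omega
          | succ n ih =>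
            intro e hlt
            have hproj : proj (X (recv e)) x = proj (X (recv e)) x' := by
              funext a
              obtain ⟨a, ha⟩ := a
              match a with
              | Sum.inl s => exact hs s
              | Sum.inr e' =>
                have := hord e e' ha
                exact ih e' (by omega)
            have h1 := hD (recv e) x (proj (X (recv e)) x) (by simp)
            have h2 := hD (recv e) x' (proj (X (recv e)) x) (by rw [hproj]; simp)
            rw [hc] at h1
            have h3 : proj (f (recv e)) x = proj (f (recv e)) x' := by
              rw [← h1, ← h2]
            have := congrFun h3 ⟨Sum.inr e, by simp [hwant]⟩
            simpa [proj] using this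
        exact fun e => key (ord e + 1) e (by omega)
      refine ⟨fun r => Sum.rec
          (motive := fun r => C →
            ({a // a ∈ Sum.elim X (fun _ : Unit => (Finset.univ.image Sum.inl : Finset (S ⊕ E))) r} → 𝔽) →
            ({a // a ∈ Sum.elim f (fun _ : Unit => (Finset.univ.image Sum.inr : Finset (S ⊕ E))) r} → 𝔽))
          (fun r => D r)
          (fun _ c xt =>
            if h : ∃ x : S ⊕ E → 𝔽, enc x = c ∧
                proj (Finset.univ.image Sum.inl : Finset (S ⊕ E)) x = xt
            then proj (Finset.univ.image Sum.inr : Finset (S ⊕ E)) h.choose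
            else fun _ => 0) r, ?_⟩
      rintro (r | u) x xt hdist
      · exact hD r x xt hdist
      · have hxt : xt = proj (Finset.univ.image Sum.inl : Finset (S ⊕ E)) x := by
          have h0 : hammingDist (proj (Finset.univ.image Sum.inl : Finset (S ⊕ E)) x) xt = 0 :=
            Nat.le_zero.mp hdist
          exact (hammingDist_eq_zero.mp h0).symm
        subst hxt
        have hex : ∃ x' : S ⊕ E → 𝔽, enc x' = enc x ∧
            proj (Finset.univ.image Sum.inl : Finset (S ⊕ E)) x' =
            proj (Finset.univ.image Sum.inl : Finset (S ⊕ E)) x := ⟨x, rfl, rfl⟩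
        simp only [dif_pos hex]
        obtain ⟨hc, hp⟩ := hex.choose_spec
        funext a
        obtain ⟨a, ha⟩ := a
        simp only [Sum.elim_inr, Finset.mem_image, Finset.mem_univ, true_and] at ha
        obtain ⟨e, rfl⟩ := ha
        have hs : ∀ s, hex.choose (Sum.inl s) = x (Sum.inl s) := by
          intro s
          have := congrFun hp ⟨Sum.inl s, by simp⟩
          simpa [proj] using this
        exact (congrFun (dif_pos (t := fun h => proj (Finset.univ.image Sum.inr : Finset (S ⊕ E)) h.choose)
          (e := fun _ => fun _ => (0 : 𝔽)) hex)
          (⟨Sum.inr e, ha⟩ : {a // a ∈ (Finset.univ.image Sum.inr : Finset (S ⊕ E))})).trans (det _ _ hc hs e)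
    · rintro ⟨D, hD⟩
      exact ⟨fun r => D (Sum.inl r), fun r x xt h => hD (Sum.inl r) x xt h⟩
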